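/- Let V ∈ L³(0,T; L^r(ℝ³)) with 3 ≤ r ≤ 9/2 and P(·,s) satisfying ‖P(s)‖_{L^{r/2}} ≤ C‖V(s)‖²_{L^r}. Then (1/R) ∫₀^T ∫_{R<|y|<2R} |P||V| dy ds ≤ C R^{2−9/r} (∫₀^T ‖V‖³_{L^r(R<|y|<2R)} ds)^{1/3} (∫₀^T ‖V‖³_{L^r} ds)^{2/3} → 0 as R → ∞. -/

import Mathlib

open MeasureTheory Filter
open scoped ENNReal NNReal

noncomputable section

abbrev E3 : Type := EuclideanSpace ℝ (Fin 3)

/-- Spatial partial derivative of a scalar function on space-time. -/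
def pdx (i : Fin 3) (f : E3 × ℝ → ℝ) (p : E3 × ℝ) : ℝ :=
  fderiv ℝ f p (EuclideanSpace.single i 1, 0)

/-- Time derivative of a scalar function on space-time. -/
def pdt (f : E3 × ℝ → ℝ) (p : E3 × ℝ) : ℝ :=
  fderiv ℝ f p (0, 1)

/-- Spatial divergence. -/
def divx (V : E3 × ℝ → E3) (p : E3 × ℝ) : ℝ := ∑ i, pdx i (fun q => V q i) p

/-- Spatial curl. -/
def curlx (V : E3 × ℝ → E3) (p : E3 × ℝ) : E3 :=
  (WithLp.equiv 2 (Fin 3 → ℝ)).symm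
    ![pdx 1 (fun q => V q 2) p - pdx 2 (fun q => V q 1) p,
      pdx 2 (fun q => V q 0) p - pdx 0 (fun q => V q 2) p,
      pdx 0 (fun q => V q 1) p - pdx 1 (fun q => V q 0) p]

/-- The similarity-variable Euler system `∂ₛV + (α/(α+1))V + (1/(α+1))(y·∇)V + (V·∇)V = -∇P`,
`div V = 0`, on all of `ℝ³ × ℝ`. -/
def EulerSim (α : ℝ) (V : E3 × ℝ → E3) (P : E3 × ℝ → ℝ) : Prop :=
  (∀ (p : E3 × ℝ) (j : Fin 3),
    pdt (fun q => V q j) p + (α / (α + 1)) * V p j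
      + (1 / (α + 1)) * ∑ i, p.1 i * pdx i (fun q => V q j) p
      + ∑ i, V p i * pdx i (fun q => V q j) p
      = - pdx j P p)
  ∧ ∀ p, divx V p = 0

/-- The incompressible Euler equations `∂ₜv + (v·∇)v = -∇p`, `div v = 0`, on `ℝ³ × I`. -/
def EulerOn (v : E3 × ℝ → E3) (pr : E3 × ℝ → ℝ) (I : Set ℝ) : Prop :=
  ∀ p : E3 × ℝ, p.2 ∈ I →
    ((∀ j : Fin 3,
        pdt (fun q => v q j) p + ∑ i, v p i * pdx i (fun q => v q j) p = - pdx j pr p)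
      ∧ divx v p = 0)


/-- Three-factor Hölder: `∫ fg ≤ ‖f‖_{r/2} ‖g‖_r μ(univ)^{1-3/r}` in `ℝ≥0∞`. -/
lemma holder3 {α : Type*} [MeasurableSpace α] (μ : Measure α) {r : ℝ} (hr : 3 ≤ r)
    {f g : α → ℝ≥0∞} (hf : Measurable f) (hg : Measurable g) :
    ∫⁻ a, f a * g a ∂μ ≤
      (∫⁻ a, f a ^ (r/2) ∂μ) ^ (2/r) * (∫⁻ a, g a ^ r ∂μ) ^ (1/r) *
        (μ Set.univ) ^ (1 - 3/r) := by
  have hr0 : (0:ℝ) < r := by linarith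
  have step2 : ∫⁻ a, (f a * g a) ^ (r/3) ∂μ ≤
      (∫⁻ a, f a ^ (r/2) ∂μ) ^ (2/3 : ℝ) * (∫⁻ a, g a ^ r ∂μ) ^ (1/3 : ℝ) := by
    have conj : Real.HolderConjugate (3/2) 3 := ⟨by norm_num, by norm_num, by norm_num⟩
    have h := ENNReal.lintegral_mul_le_Lp_mul_Lq μ conj
      (f := fun a => f a ^ (r/3)) (g := fun a => g a ^ (r/3))
      ((ENNReal.continuous_rpow_const.measurable).comp hf).aemeasurable
      ((ENNReal.continuous_rpow_const.measurable).comp hg).aemeasurable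
    calc ∫⁻ a, (f a * g a) ^ (r/3) ∂μ
        = ∫⁻ a, (fun a => f a ^ (r/3)) a * (fun a => g a ^ (r/3)) a ∂μ := by
          simp only [ENNReal.mul_rpow_of_nonneg _ _ (by positivity : (0:ℝ) ≤ r/3)]
      _ ≤ (∫⁻ a, (f a ^ (r/3)) ^ (3/2 : ℝ) ∂μ) ^ (1/(3/2) : ℝ) *
            (∫⁻ a, (g a ^ (r/3)) ^ (3 : ℝ) ∂μ) ^ (1/3 : ℝ) := h
      _ = (∫⁻ a, f a ^ (r/2) ∂μ) ^ (2/3 : ℝ) * (∫⁻ a, g a ^ r ∂μ) ^ (1/3 : ℝ) := by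
          simp only [← ENNReal.rpow_mul]
          rw [show r/3*(3/2:ℝ) = r/2 by ring, show r/3*(3:ℝ) = r by ring]
          norm_num
  rcases eq_or_lt_of_le hr with heq | hlt
  · subst heq
    have h1 : (1:ℝ) - 3/3 = 0 := by norm_num
    rw [h1, ENNReal.rpow_zero, mul_one]
    have := step2
    simpa [ENNReal.rpow_one, show (3:ℝ)/3 = 1 by norm_num, show (2:ℝ)/3 = 2/3 by norm_num]
      using this
  · have hr3 : (0:ℝ) < r - 3 := by linarith
    have conj2 : Real.HolderConjugate (r/3) (r/(r-3)) := by
      rw [Real.holderConjugate_iff]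
      constructor
      · rw [lt_div_iff₀ (by norm_num : (0:ℝ) < 3)]; linarith
      · rw [inv_div, inv_div, ← add_div]
        rw [show 3 + (r - 3) = r by ring, div_self hr0.ne']
    have h2 := ENNReal.lintegral_mul_le_Lp_mul_Lq μ conj2
      (f := fun a => f a * g a) (g := fun _ => (1:ℝ≥0∞))
      (hf.mul hg).aemeasurable aemeasurable_const
    have e1 : (1:ℝ)/(r/(r-3)) = 1 - 3/r := by
      rw [one_div_div]; field_simp
    have e2 : (1:ℝ)/(r/3) = 3/r := by rw [one_div_div]
    simp only [Pi.mul_apply, mul_one, ENNReal.one_rpow, lintegral_one, e1, e2] at h2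
    calc ∫⁻ a, f a * g a ∂μ
        ≤ (∫⁻ a, (f a * g a) ^ (r/3) ∂μ) ^ (3/r) * (μ Set.univ) ^ (1 - 3/r) := h2
      _ ≤ ((∫⁻ a, f a ^ (r/2) ∂μ) ^ (2/3 : ℝ) * (∫⁻ a, g a ^ r ∂μ) ^ (1/3 : ℝ)) ^ (3/r) *
            (μ Set.univ) ^ (1 - 3/r) := by
          exact mul_le_mul_left (ENNReal.rpow_le_rpow step2 (by positivity)) _
      _ = (∫⁻ a, f a ^ (r/2) ∂μ) ^ (2/r) * (∫⁻ a, g a ^ r ∂μ) ^ (1/r) *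
            (μ Set.univ) ^ (1 - 3/r) := by
          rw [ENNReal.mul_rpow_of_nonneg _ _ (by positivity : (0:ℝ) ≤ 3/r),
            ← ENNReal.rpow_mul, ← ENNReal.rpow_mul,
            show (2/3 : ℝ) * (3/r) = 2/r by ring, show (1/3 : ℝ) * (3/r) = 1/r by ring]


def ann (R : ℝ) : Set E3 := {y : E3 | R < ‖y‖ ∧ ‖y‖ < 2 * R}

def Iful (V : E3 × ℝ → E3) (r s : ℝ) : ℝ≥0∞ := ∫⁻ y, (‖V (y, s)‖₊ : ℝ≥0∞) ^ r

def Iann (V : E3 × ℝ → E3) (r R s : ℝ) : ℝ≥0∞ := ∫⁻ y in ann R, (‖V (y, s)‖₊ : ℝ≥0∞) ^ r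

def Jful (P : E3 × ℝ → ℝ) (r s : ℝ) : ℝ≥0∞ := ∫⁻ y, (‖P (y, s)‖₊ : ℝ≥0∞) ^ (r/2)

def Ffun (P : E3 × ℝ → ℝ) (V : E3 × ℝ → E3) (R s : ℝ) : ℝ≥0∞ :=
  ∫⁻ y in ann R, (‖P (y, s)‖₊ : ℝ≥0∞) * (‖V (y, s)‖₊ : ℝ≥0∞)

lemma ann_meas (R : ℝ) : MeasurableSet (ann R) :=
  (measurableSet_lt measurable_const measurable_norm).inter
    (measurableSet_lt measurable_norm measurable_const)

lemma ann_subset_ball (R : ℝ) : ann R ⊆ Metric.ball (0:E3) (2*R) := by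
  intro y hy
  simp only [Metric.mem_ball, dist_zero_right]
  exact hy.2

lemma eLp_eq {F : Type*} [NormedAddCommGroup F] (f : E3 → F) {c : ℝ} (hc : 0 < c) :
    eLpNorm f (ENNReal.ofReal c) volume = (∫⁻ y, (‖f y‖₊ : ℝ≥0∞) ^ c) ^ (1/c) := by
  rw [eLpNorm_eq_lintegral_rpow_enorm_toReal (ENNReal.ofReal_pos.mpr hc).ne' ENNReal.ofReal_ne_top,
    ENNReal.toReal_ofReal hc.le]
  rfl

lemma sec_meas_V {V : E3 × ℝ → E3} (hVm : Measurable V) (s : ℝ) :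
    Measurable fun y : E3 => V (y, s) :=
  hVm.comp (measurable_id.prodMk measurable_const)

lemma sec_meas_P {P : E3 × ℝ → ℝ} (hPm : Measurable P) (s : ℝ) :
    Measurable fun y : E3 => P (y, s) :=
  hPm.comp (measurable_id.prodMk measurable_const)

lemma key_pointwise {r Ccz : ℝ} (hr : 3 ≤ r) (V : E3 × ℝ → E3) (P : E3 × ℝ → ℝ)
    (hVm : Measurable V) (hPm : Measurable P)
    (hcz : ∀ s : ℝ,
      eLpNorm (fun y => P (y, s)) (ENNReal.ofReal (r / 2)) (volume : Measure E3) ≤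
        ENNReal.ofReal Ccz *
          (eLpNorm (fun y => V (y, s)) (ENNReal.ofReal r) (volume : Measure E3)) ^ 2)
    (R s : ℝ) :
    Ffun P V R s ≤ ENNReal.ofReal Ccz * (Iful V r s) ^ (2/r) * (Iann V r R s) ^ (1/r) *
      (volume (ann R)) ^ (1 - 3/r) := by
  have hr0 : (0:ℝ) < r := by linarith
  have h1 : Ffun P V R s ≤
      (∫⁻ y in ann R, ((‖P (y, s)‖₊ : ℝ≥0∞)) ^ (r/2)) ^ (2/r) *
        (Iann V r R s) ^ (1/r) * (volume (ann R)) ^ (1 - 3/r) := by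
    have := holder3 (volume.restrict (ann R)) hr
      (f := fun y : E3 => (‖P (y, s)‖₊ : ℝ≥0∞)) (g := fun y : E3 => (‖V (y, s)‖₊ : ℝ≥0∞))
      (sec_meas_P hPm s).enorm (sec_meas_V hVm s).enorm
    simpa [Ffun, Iann, Measure.restrict_apply_univ] using this
  have h2 : (∫⁻ y in ann R, ((‖P (y, s)‖₊ : ℝ≥0∞)) ^ (r/2)) ^ (2/r) ≤
      ENNReal.ofReal Ccz * (Iful V r s) ^ (2/r) := by
    have hsub : (∫⁻ y in ann R, ((‖P (y, s)‖₊ : ℝ≥0∞)) ^ (r/2)) ≤ Jful P r s :=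
      setLIntegral_le_lintegral _ _
    have hJ : (Jful P r s) ^ (2/r) ≤ ENNReal.ofReal Ccz * (Iful V r s) ^ (2/r) := by
      have h := hcz s
      rw [eLp_eq _ (by linarith : (0:ℝ) < r/2), eLp_eq _ hr0,
        one_div_div] at h
      calc (Jful P r s) ^ (2/r) = (∫⁻ y, (‖P (y,s)‖₊ : ℝ≥0∞) ^ (r/2)) ^ (2/r) := rfl
        _ ≤ ENNReal.ofReal Ccz * ((∫⁻ y, (‖V (y,s)‖₊ : ℝ≥0∞) ^ r) ^ (1/r)) ^ (2:ℕ) := h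
        _ = ENNReal.ofReal Ccz * (Iful V r s) ^ (2/r) := by
            rw [← ENNReal.rpow_natCast _ 2, ← ENNReal.rpow_mul]
            rw [show (1:ℝ)/r * (2:ℕ) = 2/r by push_cast; ring]
            rfl
    exact le_trans (ENNReal.rpow_le_rpow hsub (by positivity)) hJ
  calc Ffun P V R s ≤ _ := h1
    _ ≤ ENNReal.ofReal Ccz * (Iful V r s) ^ (2/r) * (Iann V r R s) ^ (1/r) *
        (volume (ann R)) ^ (1 - 3/r) := by
      exact mul_le_mul_left (mul_le_mul_left h2 _) _

lemma meas_Iann {V : E3 × ℝ → E3} (hVm : Measurable V) (r R : ℝ) :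
    Measurable fun s : ℝ => Iann V r R s := by
  have hb : Measurable fun p : ℝ × E3 => (‖V (p.2, p.1)‖₊ : ℝ≥0∞) ^ r :=
    ENNReal.continuous_rpow_const.measurable.comp
      ((hVm.comp (measurable_snd.prodMk measurable_fst)).enorm)
  have hf : Measurable fun p : ℝ × E3 =>
      Set.indicator (Prod.snd ⁻¹' ann R)
        (fun p : ℝ × E3 => (‖V (p.2, p.1)‖₊ : ℝ≥0∞) ^ r) p :=
    hb.indicator (measurable_snd (ann_meas R))
  have h := Measurable.lintegral_prod_right' (ν := (volume : Measure E3)) hf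
  have : (fun s : ℝ => Iann V r R s) = fun s : ℝ => ∫⁻ y,
      Set.indicator (Prod.snd ⁻¹' ann R)
        (fun p : ℝ × E3 => (‖V (p.2, p.1)‖₊ : ℝ≥0∞) ^ r) (s, y) := by
    funext s
    rw [Iann, ← lintegral_indicator (ann_meas R)]
    congr 1
  rw [this]
  exact h

lemma meas_Iful {V : E3 × ℝ → E3} (hVm : Measurable V) (r : ℝ) :
    Measurable fun s : ℝ => Iful V r s := by
  have hb : Measurable fun p : ℝ × E3 => (‖V (p.2, p.1)‖₊ : ℝ≥0∞) ^ r :=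
    ENNReal.continuous_rpow_const.measurable.comp
      ((hVm.comp (measurable_snd.prodMk measurable_fst)).enorm)
  exact Measurable.lintegral_prod_right' (ν := (volume : Measure E3)) hb

lemma meas_Ffun {P : E3 × ℝ → ℝ} {V : E3 × ℝ → E3} (hPm : Measurable P) (hVm : Measurable V)
    (R : ℝ) : Measurable fun s : ℝ => Ffun P V R s := by
  have hb : Measurable fun p : ℝ × E3 =>
      (‖P (p.2, p.1)‖₊ : ℝ≥0∞) * (‖V (p.2, p.1)‖₊ : ℝ≥0∞) :=
    ((hPm.comp (measurable_snd.prodMk measurable_fst)).enorm).mul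
      ((hVm.comp (measurable_snd.prodMk measurable_fst)).enorm)
  have hf : Measurable fun p : ℝ × E3 =>
      Set.indicator (Prod.snd ⁻¹' ann R)
        (fun p : ℝ × E3 => (‖P (p.2, p.1)‖₊ : ℝ≥0∞) * (‖V (p.2, p.1)‖₊ : ℝ≥0∞)) p :=
    hb.indicator (measurable_snd (ann_meas R))
  have h := Measurable.lintegral_prod_right' (ν := (volume : Measure E3)) hf
  have : (fun s : ℝ => Ffun P V R s) = fun s : ℝ => ∫⁻ y,
      Set.indicator (Prod.snd ⁻¹' ann R)
        (fun p : ℝ × E3 => (‖P (p.2, p.1)‖₊ : ℝ≥0∞) * (‖V (p.2, p.1)‖₊ : ℝ≥0∞)) (s, y) := by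
    funext s
    rw [Ffun, ← lintegral_indicator (ann_meas R)]
    congr 1
  rw [this]
  exact h

lemma Gle {T r Ccz : ℝ} (hr : 3 ≤ r) (V : E3 × ℝ → E3) (P : E3 × ℝ → ℝ)
    (hVm : Measurable V) (hPm : Measurable P)
    (hcz : ∀ s : ℝ,
      eLpNorm (fun y => P (y, s)) (ENNReal.ofReal (r / 2)) (volume : Measure E3) ≤
        ENNReal.ofReal Ccz *
          (eLpNorm (fun y => V (y, s)) (ENNReal.ofReal r) (volume : Measure E3)) ^ 2)
    (R : ℝ) :
    ∫⁻ s in Set.Ioo (0:ℝ) T, Ffun P V R s ≤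
      ENNReal.ofReal Ccz * (volume (ann R)) ^ (1 - 3/r) *
        ((∫⁻ s in Set.Ioo (0:ℝ) T, (Iann V r R s) ^ (3/r)) ^ ((1:ℝ)/3) *
         (∫⁻ s in Set.Ioo (0:ℝ) T, (Iful V r s) ^ (3/r)) ^ ((2:ℝ)/3)) := by
  have hr0 : (0:ℝ) < r := by linarith
  have h1 : ∫⁻ s in Set.Ioo (0:ℝ) T, Ffun P V R s ≤
      ∫⁻ s in Set.Ioo (0:ℝ) T,
        ENNReal.ofReal Ccz * (volume (ann R)) ^ (1 - 3/r) *
          ((Iann V r R s) ^ (1/r) * (Iful V r s) ^ (2/r)) := by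
    refine lintegral_mono fun s => ?_
    calc Ffun P V R s ≤ ENNReal.ofReal Ccz * (Iful V r s) ^ (2/r) * (Iann V r R s) ^ (1/r) *
        (volume (ann R)) ^ (1 - 3/r) := key_pointwise hr V P hVm hPm hcz R s
      _ = ENNReal.ofReal Ccz * (volume (ann R)) ^ (1 - 3/r) *
          ((Iann V r R s) ^ (1/r) * (Iful V r s) ^ (2/r)) := by ring
  have h2 : ∫⁻ s in Set.Ioo (0:ℝ) T,
      ENNReal.ofReal Ccz * (volume (ann R)) ^ (1 - 3/r) *
        ((Iann V r R s) ^ (1/r) * (Iful V r s) ^ (2/r)) =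
      ENNReal.ofReal Ccz * (volume (ann R)) ^ (1 - 3/r) *
        ∫⁻ s in Set.Ioo (0:ℝ) T, (Iann V r R s) ^ (1/r) * (Iful V r s) ^ (2/r) := by
    rw [lintegral_const_mul]
    exact ((ENNReal.continuous_rpow_const.measurable.comp (meas_Iann hVm r R)).mul
      (ENNReal.continuous_rpow_const.measurable.comp (meas_Iful hVm r)))
  have h3 : ∫⁻ s in Set.Ioo (0:ℝ) T, (Iann V r R s) ^ (1/r) * (Iful V r s) ^ (2/r) ≤
      (∫⁻ s in Set.Ioo (0:ℝ) T, (Iann V r R s) ^ (3/r)) ^ ((1:ℝ)/3) *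
        (∫⁻ s in Set.Ioo (0:ℝ) T, (Iful V r s) ^ (3/r)) ^ ((2:ℝ)/3) := by
    have conj : Real.HolderConjugate 3 (3/2) := ⟨by norm_num, by norm_num, by norm_num⟩
    have h := ENNReal.lintegral_mul_le_Lp_mul_Lq ((volume : Measure ℝ).restrict (Set.Ioo 0 T))
      conj
      (f := fun s => (Iann V r R s) ^ (1/r)) (g := fun s => (Iful V r s) ^ (2/r))
      (ENNReal.continuous_rpow_const.measurable.comp (meas_Iann hVm r R)).aemeasurable
      (ENNReal.continuous_rpow_const.measurable.comp (meas_Iful hVm r)).aemeasurable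
    simp only [Pi.mul_apply] at h
    calc ∫⁻ s in Set.Ioo (0:ℝ) T, (Iann V r R s) ^ (1/r) * (Iful V r s) ^ (2/r)
        ≤ (∫⁻ s in Set.Ioo (0:ℝ) T, ((Iann V r R s) ^ (1/r)) ^ (3:ℝ)) ^ ((1:ℝ)/3) *
          (∫⁻ s in Set.Ioo (0:ℝ) T, ((Iful V r s) ^ (2/r)) ^ (3/2:ℝ)) ^ ((1:ℝ)/(3/2)) := h
      _ = (∫⁻ s in Set.Ioo (0:ℝ) T, (Iann V r R s) ^ (3/r)) ^ ((1:ℝ)/3) *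
          (∫⁻ s in Set.Ioo (0:ℝ) T, (Iful V r s) ^ (3/r)) ^ ((2:ℝ)/3) := by
        simp only [← ENNReal.rpow_mul]
        rw [show (1:ℝ)/r * 3 = 3/r by ring, show (2:ℝ)/r * (3/2) = 3/r by ring,
          show (1:ℝ)/(3/2) = 2/3 by norm_num]
  calc ∫⁻ s in Set.Ioo (0:ℝ) T, Ffun P V R s ≤ _ := h1
    _ = _ := h2
    _ ≤ _ := mul_le_mul_right h3 _

lemma real_inner {P : E3 × ℝ → ℝ} {V : E3 × ℝ → E3} (hVm : Measurable V) (hPm : Measurable P)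
    (R s : ℝ) :
    ∫ y in ann R, |P (y, s)| * ‖V (y, s)‖ = (Ffun P V R s).toReal := by
  rw [integral_eq_lintegral_of_nonneg_ae
    (Filter.Eventually.of_forall fun y => mul_nonneg (abs_nonneg _) (norm_nonneg _))
    ((sec_meas_P hPm s).abs.mul (sec_meas_V hVm s).norm).aestronglyMeasurable]
  congr 1
  refine lintegral_congr fun y => ?_
  rw [ENNReal.ofReal_mul (abs_nonneg _), ← Real.norm_eq_abs,
    ofReal_norm, ofReal_norm]
  rfl

lemma time_conv {W : ℝ → ℝ≥0∞} (hW : Measurable W) {T : ℝ}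
    (hfin : (∫⁻ s in Set.Ioo (0:ℝ) T, W s) ≠ ⊤) :
    ∫ s in Set.Ioo (0:ℝ) T, (W s).toReal = (∫⁻ s in Set.Ioo (0:ℝ) T, W s).toReal := by
  rw [integral_eq_lintegral_of_nonneg_ae
    (Filter.Eventually.of_forall fun s => ENNReal.toReal_nonneg)
    (ENNReal.measurable_toReal.comp hW).aestronglyMeasurable]
  congr 1
  refine lintegral_congr_ae ?_
  filter_upwards [ae_lt_top hW hfin] with s hs using ENNReal.ofReal_toReal hs.ne

lemma conv_inner {V : E3 × ℝ → E3} (hVm : Measurable V) {r : ℝ} (hr0 : 0 < r) (s : ℝ)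
    (μ : Measure E3) :
    (∫ y, ‖V (y, s)‖ ^ r ∂μ) ^ ((3:ℝ)/r) =
      ((∫⁻ y, (‖V (y, s)‖₊ : ℝ≥0∞) ^ r ∂μ) ^ ((3:ℝ)/r)).toReal := by
  rw [← ENNReal.toReal_rpow]
  congr 1
  rw [integral_eq_lintegral_of_nonneg_ae
    (Filter.Eventually.of_forall fun y => Real.rpow_nonneg (norm_nonneg _) r)
    ((sec_meas_V hVm s).norm.pow measurable_const).aestronglyMeasurable]
  congr 1
  refine lintegral_congr fun y => ?_
  rw [← ENNReal.ofReal_rpow_of_nonneg (norm_nonneg _) hr0.le, ofReal_norm]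
  rfl


lemma ann_lim {V : E3 × ℝ → E3} {r : ℝ} (hr0 : 0 < r) (s : ℝ)
    (hfin : Iful V r s ≠ ⊤) :
    Tendsto (fun R : ℝ => (Iann V r R s) ^ ((3:ℝ)/r)) atTop (nhds 0) := by
  have h1 : Tendsto (fun R : ℝ => Iann V r R s) atTop (nhds 0) := by
    set ν := volume.withDensity (fun y : E3 => (‖V (y, s)‖₊ : ℝ≥0∞) ^ r) with hν
    have hν_apply : ∀ t : Set E3, MeasurableSet t →
        ν t = ∫⁻ y in t, (‖V (y, s)‖₊ : ℝ≥0∞) ^ r := fun t ht => withDensity_apply _ ht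
    have hνfin : ν Set.univ ≠ ⊤ := by
      rw [hν_apply _ MeasurableSet.univ, Measure.restrict_univ]; exact hfin
    have hm : ∀ n : ℕ, MeasurableSet {y : E3 | (n:ℝ) < ‖y‖} :=
      fun n => measurableSet_lt measurable_const measurable_norm
    have hseq : Tendsto (fun n : ℕ => ν {y : E3 | (n:ℝ) < ‖y‖}) atTop (nhds 0) := by
      have ha : Antitone (fun n : ℕ => {y : E3 | (n:ℝ) < ‖y‖}) := by
        intro m n hmn y hy
        exact lt_of_le_of_lt (by exact_mod_cast hmn : (m:ℝ) ≤ (n:ℝ)) hy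
      have hfin0 : ∃ n : ℕ, ν {y : E3 | (n:ℝ) < ‖y‖} ≠ ⊤ :=
        ⟨0, ((measure_mono (Set.subset_univ _)).trans_lt (lt_top_iff_ne_top.mpr hνfin)).ne⟩
      have ht := tendsto_measure_iInter_atTop (μ := ν)
        (fun n => (hm n).nullMeasurableSet) ha hfin0
      have hempty : ⋂ n : ℕ, {y : E3 | (n:ℝ) < ‖y‖} = ∅ := by
        ext y
        simp only [Set.mem_iInter, Set.mem_setOf_eq, Set.mem_empty_iff_false, iff_false,
          not_forall, not_lt]
        obtain ⟨n, hn⟩ := exists_nat_gt ‖y‖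
        exact ⟨n, hn.le⟩
      rw [hempty, measure_empty] at ht
      exact ht
    refine ENNReal.tendsto_nhds_zero.mpr fun ε hε => ?_
    obtain ⟨N, hN⟩ := eventually_atTop.mp (ENNReal.tendsto_nhds_zero.mp hseq ε hε)
    filter_upwards [eventually_ge_atTop ((N:ℝ))] with R hRN
    have hsub : ann R ⊆ {y : E3 | (N:ℝ) < ‖y‖} := fun y hy => lt_of_le_of_lt hRN hy.1
    calc Iann V r R s = ν (ann R) := (hν_apply _ (ann_meas R)).symm
      _ ≤ ν {y : E3 | (N:ℝ) < ‖y‖} := measure_mono hsub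
      _ ≤ ε := hN N le_rfl
  have h2 := (ENNReal.continuous_rpow_const (y := (3:ℝ)/r)).tendsto (0 : ℝ≥0∞)
  have h3 := h2.comp h1
  simpa [Function.comp_def, ENNReal.zero_rpow_of_pos (by positivity : (0:ℝ) < 3/r)] using h3

/-- Hölder estimate on annuli for the pressure term: with the Calderón–Zygmund bound
`‖P(s)‖_{L^{r/2}} ≤ C‖V(s)‖²_{L^r}`, the flux term `(1/R)∫₀^T∫_{R<|y|<2R} |P||V|` is bounded by
`C R^{2-9/r} (∫₀^T ‖V‖³_{L^r(ann)})^{1/3} (∫₀^T ‖V‖³_{L^r})^{2/3}` and tends to `0`. -/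
theorem stmt15 (T r Ccz : ℝ) (hT : 0 < T) (hr : 3 ≤ r) (hr' : r ≤ 9 / 2) (hCcz : 0 < Ccz)
    (V : E3 × ℝ → E3) (P : E3 × ℝ → ℝ) (hVm : Measurable V) (hPm : Measurable P)
    (hL : (∫⁻ s in Set.Ioo (0 : ℝ) T,
        (eLpNorm (fun y => V (y, s)) (ENNReal.ofReal r) (volume : Measure E3)) ^ (3 : ℕ)) < ⊤)
    (hcz : ∀ s : ℝ,
      eLpNorm (fun y => P (y, s)) (ENNReal.ofReal (r / 2)) (volume : Measure E3) ≤
        ENNReal.ofReal Ccz *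
          (eLpNorm (fun y => V (y, s)) (ENNReal.ofReal r) (volume : Measure E3)) ^ 2) :
    (∃ C : ℝ, 0 < C ∧ ∀ R : ℝ, 0 < R →
      (1 / R) * (∫ s in Set.Ioo (0 : ℝ) T,
          ∫ y in {y : E3 | R < ‖y‖ ∧ ‖y‖ < 2 * R}, |P (y, s)| * ‖V (y, s)‖)
        ≤ C * R ^ (2 - 9 / r) *
          ((∫ s in Set.Ioo (0 : ℝ) T,
              (∫ y in {y : E3 | R < ‖y‖ ∧ ‖y‖ < 2 * R}, ‖V (y, s)‖ ^ r) ^ (3 / r)) ^ ((1 : ℝ) / 3)) *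
          ((∫ s in Set.Ioo (0 : ℝ) T,
              (∫ y : E3, ‖V (y, s)‖ ^ r) ^ (3 / r)) ^ ((2 : ℝ) / 3)))
    ∧ Filter.Tendsto (fun R : ℝ =>
        (1 / R) * ∫ s in Set.Ioo (0 : ℝ) T,
          ∫ y in {y : E3 | R < ‖y‖ ∧ ‖y‖ < 2 * R}, |P (y, s)| * ‖V (y, s)‖)
        Filter.atTop (nhds 0) := by
  have hr0 : (0:ℝ) < r := by linarith
  have hexp : (0:ℝ) ≤ 1 - 3/r := by
    have : (3:ℝ)/r ≤ 1 := by rw [div_le_one hr0]; linarith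
    linarith
  -- finiteness of the full-space time integral
  have heq3 : ∀ s : ℝ, (eLpNorm (fun y => V (y, s)) (ENNReal.ofReal r) volume) ^ (3:ℕ)
      = (Iful V r s) ^ ((3:ℝ)/r) := by
    intro s
    rw [eLp_eq _ hr0, ← ENNReal.rpow_natCast _ 3, ← ENNReal.rpow_mul,
      show (1:ℝ)/r * (3:ℕ) = 3/r by push_cast; ring]
    rfl
  have hY'fin : (∫⁻ s in Set.Ioo (0:ℝ) T, (Iful V r s) ^ ((3:ℝ)/r)) ≠ ⊤ := by
    simp only [heq3] at hL
    exact hL.ne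
  have hX'le : ∀ R : ℝ, (∫⁻ s in Set.Ioo (0:ℝ) T, (Iann V r R s) ^ ((3:ℝ)/r)) ≤
      ∫⁻ s in Set.Ioo (0:ℝ) T, (Iful V r s) ^ ((3:ℝ)/r) := by
    intro R
    refine lintegral_mono fun s => ENNReal.rpow_le_rpow (setLIntegral_le_lintegral _ _)
      (by positivity)
  have hX'fin : ∀ R : ℝ, (∫⁻ s in Set.Ioo (0:ℝ) T, (Iann V r R s) ^ ((3:ℝ)/r)) ≠ ⊤ :=
    fun R => ((hX'le R).trans_lt (lt_top_iff_ne_top.mpr hY'fin)).ne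
  -- the annulus measure bound
  have hannfin : ∀ R : ℝ, volume (ann R) ≠ ⊤ := by
    intro R
    by_cases hR : 0 < R
    · exact ((measure_mono (ann_subset_ball R)).trans_lt measure_ball_lt_top).ne
    · have : ann R = ∅ := by
        ext y
        simp only [ann, Set.mem_setOf_eq, Set.mem_empty_iff_false, iff_false, not_and]
        intro h1
        nlinarith [norm_nonneg y, h1]
      simp [this]
  have hannR : ∀ R : ℝ, 0 < R → volume (ann R) ≤
      ENNReal.ofReal (8 * R^3) * volume (Metric.ball (0:E3) 1) := by
    intro R hR
    refine (measure_mono (ann_subset_ball R)).trans ?_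
    rw [Measure.addHaar_ball (volume : Measure E3) (0:E3) (by linarith : (0:ℝ) ≤ 2*R)]
    rw [show (Module.finrank ℝ E3) = 3 from finrank_euclideanSpace_fin,
      show ((2*R)^(3:ℕ) : ℝ) = 8 * R^3 by ring]
  -- finiteness of bound and G
  have hGle := fun R => Gle (T := T) hr V P hVm hPm hcz R
  have hboundfin : ∀ R : ℝ,
      ENNReal.ofReal Ccz * (volume (ann R)) ^ (1 - 3/r) *
        ((∫⁻ s in Set.Ioo (0:ℝ) T, (Iann V r R s) ^ ((3:ℝ)/r)) ^ ((1:ℝ)/3) *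
         (∫⁻ s in Set.Ioo (0:ℝ) T, (Iful V r s) ^ ((3:ℝ)/r)) ^ ((2:ℝ)/3)) ≠ ⊤ := by
    intro R
    refine ENNReal.mul_ne_top (ENNReal.mul_ne_top ENNReal.ofReal_ne_top ?_) (ENNReal.mul_ne_top ?_ ?_)
    · exact (ENNReal.rpow_lt_top_of_nonneg hexp (hannfin R)).ne
    · exact (ENNReal.rpow_lt_top_of_nonneg (by norm_num) (hX'fin R)).ne
    · exact (ENNReal.rpow_lt_top_of_nonneg (by norm_num) hY'fin).ne
  have hGfin : ∀ R : ℝ, (∫⁻ s in Set.Ioo (0:ℝ) T, Ffun P V R s) ≠ ⊤ :=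
    fun R => ((hGle R).trans_lt (lt_top_iff_ne_top.mpr (hboundfin R))).ne
  -- real-valued conversions
  have hLHS : ∀ R : ℝ,
      (∫ s in Set.Ioo (0:ℝ) T, ∫ y in ann R, |P (y, s)| * ‖V (y, s)‖) =
        (∫⁻ s in Set.Ioo (0:ℝ) T, Ffun P V R s).toReal := by
    intro R
    rw [← time_conv (meas_Ffun hPm hVm R) (hGfin R)]
    simp only [real_inner hVm hPm]
  have hXR : ∀ R : ℝ,
      (∫ s in Set.Ioo (0:ℝ) T, (∫ y in ann R, ‖V (y, s)‖ ^ r) ^ ((3:ℝ)/r)) =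
        (∫⁻ s in Set.Ioo (0:ℝ) T, (Iann V r R s) ^ ((3:ℝ)/r)).toReal := by
    intro R
    have := time_conv (W := fun s => (Iann V r R s) ^ ((3:ℝ)/r))
      (ENNReal.continuous_rpow_const.measurable.comp (meas_Iann hVm r R)) (hX'fin R)
    rw [← this]
    simp only [conv_inner hVm hr0]
    rfl
  have hYR :
      (∫ s in Set.Ioo (0:ℝ) T, (∫ y : E3, ‖V (y, s)‖ ^ r) ^ ((3:ℝ)/r)) =
        (∫⁻ s in Set.Ioo (0:ℝ) T, (Iful V r s) ^ ((3:ℝ)/r)).toReal := by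
    have := time_conv (W := fun s => (Iful V r s) ^ ((3:ℝ)/r))
      (ENNReal.continuous_rpow_const.measurable.comp (meas_Iful hVm r)) hY'fin
    rw [← this]
    simp only [conv_inner hVm hr0]
    rfl
  -- constants
  have hB1fin : (volume (Metric.ball (0:E3) 1)) ≠ ⊤ := measure_ball_lt_top.ne
  have hb1tpos : 0 < (volume (Metric.ball (0:E3) 1)).toReal :=
    ENNReal.toReal_pos (Metric.measure_ball_pos volume 0 one_pos).ne' hB1fin
  set b1t : ℝ := (volume (Metric.ball (0:E3) 1)).toReal with hb1t
  have hCpos : 0 < Ccz * (8*b1t) ^ (1 - 3/r) :=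
    mul_pos hCcz (Real.rpow_pos_of_pos (by linarith) _)
  -- the main real inequality
  have hmain : ∀ R : ℝ, 0 < R →
      (1/R) * ((∫⁻ s in Set.Ioo (0:ℝ) T, Ffun P V R s).toReal) ≤
        (Ccz * (8*b1t)^(1 - 3/r)) * R^(2 - 9/r) *
          ((∫⁻ s in Set.Ioo (0:ℝ) T, (Iann V r R s) ^ ((3:ℝ)/r)).toReal ^ ((1:ℝ)/3)) *
          ((∫⁻ s in Set.Ioo (0:ℝ) T, (Iful V r s) ^ ((3:ℝ)/r)).toReal ^ ((2:ℝ)/3)) := by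
    intro R hR
    set x : ℝ := (∫⁻ s in Set.Ioo (0:ℝ) T, (Iann V r R s) ^ ((3:ℝ)/r)).toReal ^ ((1:ℝ)/3)
      with hx
    set y : ℝ := (∫⁻ s in Set.Ioo (0:ℝ) T, (Iful V r s) ^ ((3:ℝ)/r)).toReal ^ ((2:ℝ)/3)
      with hy
    have hxnn : 0 ≤ x := Real.rpow_nonneg ENNReal.toReal_nonneg _
    have hynn : 0 ≤ y := Real.rpow_nonneg ENNReal.toReal_nonneg _
    have h1 : (∫⁻ s in Set.Ioo (0:ℝ) T, Ffun P V R s).toReal ≤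
        Ccz * ((volume (ann R)).toReal)^(1 - 3/r) * (x * y) := by
      have h1a := ENNReal.toReal_mono (hboundfin R) (hGle R)
      have h1b : (ENNReal.ofReal Ccz * (volume (ann R)) ^ (1 - 3/r) *
          ((∫⁻ s in Set.Ioo (0:ℝ) T, (Iann V r R s) ^ ((3:ℝ)/r)) ^ ((1:ℝ)/3) *
           (∫⁻ s in Set.Ioo (0:ℝ) T, (Iful V r s) ^ ((3:ℝ)/r)) ^ ((2:ℝ)/3))).toReal =
          Ccz * ((volume (ann R)).toReal)^(1 - 3/r) * (x * y) := by
        rw [ENNReal.toReal_mul, ENNReal.toReal_mul, ENNReal.toReal_mul,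
          ENNReal.toReal_ofReal hCcz.le, ← ENNReal.toReal_rpow, ← ENNReal.toReal_rpow,
          ← ENNReal.toReal_rpow]
      rw [h1b] at h1a
      exact h1a
    have h3 : ((volume (ann R)).toReal) ≤ 8*R^3*b1t := by
      have h' := ENNReal.toReal_mono (ENNReal.mul_ne_top ENNReal.ofReal_ne_top hB1fin)
        (hannR R hR)
      rwa [ENNReal.toReal_mul, ENNReal.toReal_ofReal (by positivity)] at h'
    have h4 : ((volume (ann R)).toReal)^(1 - 3/r) ≤ (8*R^3*b1t)^(1 - 3/r) :=
      Real.rpow_le_rpow ENNReal.toReal_nonneg h3 hexp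
    have h5 : (8*R^3*b1t : ℝ)^(1 - 3/r) = (8*b1t)^(1 - 3/r) * R^((3:ℝ) - 9/r) := by
      have hR3 : (R:ℝ)^(3:ℕ) = R^((3:ℝ)) := by
        rw [← Real.rpow_natCast R 3]; norm_num
      rw [show (8*R^3*b1t : ℝ) = (8*b1t) * R^(3:ℕ) by ring, hR3,
        Real.mul_rpow (by positivity) (by positivity), ← Real.rpow_mul hR.le,
        show (3:ℝ) * (1 - 3/r) = 3 - 9/r by ring]
    have h6 : R^((3:ℝ) - 9/r) = R * R^((2:ℝ) - 9/r) := by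
      rw [show (3:ℝ) - 9/r = 1 + (2 - 9/r) by ring, Real.rpow_add hR, Real.rpow_one]
    calc (1/R) * ((∫⁻ s in Set.Ioo (0:ℝ) T, Ffun P V R s).toReal)
        ≤ (1/R) * (Ccz * ((volume (ann R)).toReal)^(1 - 3/r) * (x * y)) := by
          exact mul_le_mul_of_nonneg_left h1 (by positivity)
      _ ≤ (1/R) * (Ccz * ((8*R^3*b1t)^(1 - 3/r)) * (x * y)) := by
          refine mul_le_mul_of_nonneg_left ?_ (by positivity)
          refine mul_le_mul_of_nonneg_right (mul_le_mul_of_nonneg_left h4 hCcz.le) ?_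
          positivity
      _ = (Ccz * (8*b1t)^(1 - 3/r)) * R^(2 - 9/r) * x * y := by
          rw [h5, h6]
          field_simp
  -- rewrite the goal in terms of the above
  have hset : ∀ R : ℝ, {y : E3 | R < ‖y‖ ∧ ‖y‖ < 2 * R} = ann R := fun _ => rfl
  constructor
  · refine ⟨Ccz * (8*b1t)^(1 - 3/r), hCpos, fun R hR => ?_⟩
    rw [hset R, hLHS R, hXR R, hYR]
    exact hmain R hR
  · -- the limit
    have hX'0 : Tendsto (fun R : ℝ => ∫⁻ s in Set.Ioo (0:ℝ) T, (Iann V r R s) ^ ((3:ℝ)/r))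
        atTop (nhds 0) := by
      have hlim : ∀ᵐ s ∂((volume : Measure ℝ).restrict (Set.Ioo (0:ℝ) T)),
          Tendsto (fun R : ℝ => (Iann V r R s) ^ ((3:ℝ)/r)) atTop (nhds 0) := by
        have hae := ae_lt_top
          (ENNReal.continuous_rpow_const.measurable.comp (meas_Iful hVm r)) hY'fin
        filter_upwards [hae] with s hs
        have hIfin : Iful V r s ≠ ⊤ := by
          intro h
          rw [Function.comp_apply, h, ENNReal.top_rpow_of_pos (by positivity : (0:ℝ) < 3/r)]
            at hs
          exact absurd hs (lt_irrefl ⊤)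
        exact ann_lim hr0 s hIfin
      have ht := tendsto_lintegral_filter_of_dominated_convergence
        (μ := (volume : Measure ℝ).restrict (Set.Ioo (0:ℝ) T))
        (F := fun R s => (Iann V r R s) ^ ((3:ℝ)/r)) (f := fun _ => 0)
        (fun s => (Iful V r s) ^ ((3:ℝ)/r))
        (Filter.Eventually.of_forall fun R =>
          ENNReal.continuous_rpow_const.measurable.comp (meas_Iann hVm r R))
        (Filter.Eventually.of_forall fun R => Filter.Eventually.of_forall fun s =>
          ENNReal.rpow_le_rpow (setLIntegral_le_lintegral _ _) (by positivity))
        hY'fin hlim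
      simpa using ht
    have hXto0 : Tendsto
        (fun R : ℝ => (∫⁻ s in Set.Ioo (0:ℝ) T, (Iann V r R s) ^ ((3:ℝ)/r)).toReal)
        atTop (nhds 0) := by
      have := (ENNReal.tendsto_toReal (by simp : (0:ℝ≥0∞) ≠ ⊤)).comp hX'0
      simpa [Function.comp_def] using this
    have hpow : Tendsto
        (fun R : ℝ =>
          (∫⁻ s in Set.Ioo (0:ℝ) T, (Iann V r R s) ^ ((3:ℝ)/r)).toReal ^ ((1:ℝ)/3))
        atTop (nhds 0) := by
      have hcont := (Real.continuousAt_rpow_const 0 ((1:ℝ)/3) (Or.inr (by norm_num))).tendsto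
      have := hcont.comp hXto0
      simpa [Function.comp_def, Real.zero_rpow (by norm_num : ((1:ℝ)/3) ≠ 0)] using this
    set yc : ℝ := (∫⁻ s in Set.Ioo (0:ℝ) T, (Iful V r s) ^ ((3:ℝ)/r)).toReal ^ ((2:ℝ)/3)
      with hyc
    have hycnn : 0 ≤ yc := Real.rpow_nonneg ENNReal.toReal_nonneg _
    have hg : Tendsto (fun R : ℝ => (Ccz * (8*b1t)^(1 - 3/r)) *
        ((∫⁻ s in Set.Ioo (0:ℝ) T, (Iann V r R s) ^ ((3:ℝ)/r)).toReal ^ ((1:ℝ)/3)) * yc)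
        atTop (nhds 0) := by
      have := (hpow.const_mul (Ccz * (8*b1t)^(1 - 3/r))).mul_const yc
      simpa using this
    refine squeeze_zero' ?_ ?_ hg
    · filter_upwards [eventually_gt_atTop (0:ℝ)] with R hR
      rw [hset R, hLHS R]
      positivity
    · filter_upwards [eventually_ge_atTop (1:ℝ)] with R hR1
      have hR : (0:ℝ) < R := lt_of_lt_of_le one_pos hR1
      rw [hset R, hLHS R]
      have hRle : R^((2:ℝ) - 9/r) ≤ 1 := by
        refine Real.rpow_le_one_of_one_le_of_nonpos hR1 ?_
        have : (2:ℝ) ≤ 9/r := by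
          rw [le_div_iff₀ hr0]; linarith
        linarith
      calc (1/R) * ((∫⁻ s in Set.Ioo (0:ℝ) T, Ffun P V R s).toReal)
          ≤ (Ccz * (8*b1t)^(1 - 3/r)) * R^(2 - 9/r) *
            ((∫⁻ s in Set.Ioo (0:ℝ) T, (Iann V r R s) ^ ((3:ℝ)/r)).toReal ^ ((1:ℝ)/3)) * yc :=
            hmain R hR
        _ ≤ (Ccz * (8*b1t)^(1 - 3/r)) * 1 *
            ((∫⁻ s in Set.Ioo (0:ℝ) T, (Iann V r R s) ^ ((3:ℝ)/r)).toReal ^ ((1:ℝ)/3)) * yc := by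
            refine mul_le_mul_of_nonneg_right (mul_le_mul_of_nonneg_right ?_ ?_) hycnn
            · exact mul_le_mul_of_nonneg_left hRle hCpos.le
            · exact Real.rpow_nonneg ENNReal.toReal_nonneg _
        _ = (Ccz * (8*b1t)^(1 - 3/r)) *
            ((∫⁻ s in Set.Ioo (0:ℝ) T, (Iann V r R s) ^ ((3:ℝ)/r)).toReal ^ ((1:ℝ)/3)) * yc := by
            ring

end
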